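/- Let J be the 3×3 all-ones matrix and M_2 = [[0,1,0],[0,1,0],[1,1,1]]. Let s_1,...,s_{2t} be positive integers with s_1 ≥ 2. Then 3^{s_1+s_3+⋯+s_{2t-1}} < Σ_{i,j} (J^{s_1-1} M_2^{s_2} J^{s_3} M_2^{s_4} ⋯ J^{s_{2t-1}} M_2^{s_{2t}})_{ij} < 3^{s_1+s_3+⋯+s_{2t-1}} · ∏_{i=1}^t (2 s_{2i} + 1). -/
import Mathlib

private def Jm : Matrix (Fin 3) (Fin 3) ℤ := Matrix.of fun _ _ => 1

private def Wm (m : ℕ) : Matrix (Fin 3) (Fin 3) ℤ :=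
  !![1, 2*m+1, 1; 1, 2*m+1, 1; 1, 2*m+1, 1]

private lemma W_zero : Wm 0 = Jm := by
  ext i j; fin_cases i <;> fin_cases j <;>
    simp [Wm, Jm, Matrix.vecHead, Matrix.vecTail]

private lemma W_mul_M (m : ℕ) :
    Wm m * !![0,1,0;0,1,0;1,1,1] = Wm (m+1) := by
  ext i j; fin_cases i <;> fin_cases j <;>
    simp [Wm, Matrix.mul_apply, Fin.sum_univ_three, Matrix.vecHead, Matrix.vecTail] <;>
    ring

private lemma J_mul_Mpow (m : ℕ) :
    Jm * (!![0,1,0;0,1,0;1,1,1] : Matrix (Fin 3) (Fin 3) ℤ)^m = Wm m := by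
  induction m with
  | zero => rw [pow_zero, mul_one, W_zero]
  | succ n ih => rw [pow_succ, ← mul_assoc, ih, W_mul_M]

private lemma W_mul_J (m : ℕ) : Wm m * Jm = (2*(m:ℤ)+3) • Jm := by
  ext i j; fin_cases i <;> fin_cases j <;>
    simp [Wm, Jm, Matrix.mul_apply, Fin.sum_univ_three, Matrix.vecHead, Matrix.vecTail] <;>
    ring

private lemma J_mul_J : Jm * Jm = (3:ℤ) • Jm := by
  ext i j; fin_cases i <;> fin_cases j <;>
    simp [Jm, Matrix.mul_apply, Fin.sum_univ_three]

private lemma J_pow (k : ℕ) : Jm^(k+1) = (3:ℤ)^k • Jm := by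
  induction k with
  | zero => simp
  | succ n ih => rw [pow_succ, ih, Matrix.smul_mul, J_mul_J, smul_smul, pow_succ]

private lemma W_J_M (m' b m : ℕ) :
    Wm m' * Jm^(b+1) * (!![0,1,0;0,1,0;1,1,1] : Matrix (Fin 3) (Fin 3) ℤ)^m
      = ((2*(m':ℤ)+3) * 3^b) • Wm m := by
  rw [J_pow, Matrix.mul_smul, W_mul_J, smul_smul, Matrix.smul_mul, J_mul_Mpow, mul_comm]

/-- Theorem 4 of the paper: for the alternating product of the all-ones matrix
`J` and `M₂` with durations `s₁,…,s_{2t}`,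
`3^(s₁+s₃+⋯+s_{2t-1}) < ∑ entries < 3^(s₁+s₃+⋯+s_{2t-1}) ∏_{i=1}^t (2 s_{2i}+1)`. -/
theorem alternating_ones_M2_bounds (J M₂ : Matrix (Fin 3) (Fin 3) ℤ)
    (hJ : J = Matrix.of fun _ _ => (1 : ℤ)) (hM₂ : M₂ = !![0,1,0;0,1,0;1,1,1])
    (s : ℕ → ℕ) (hs : ∀ i, 1 ≤ s i) (hs1 : 2 ≤ s 1)
    (P : ℕ → Matrix (Fin 3) (Fin 3) ℤ) (hP0 : P 0 = 1)
    (hP : ∀ i, P (i + 1) =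
      P i * J ^ (if i = 0 then s 1 - 1 else s (2 * i + 1)) * M₂ ^ (s (2 * i + 2)))
    (t : ℕ) (ht : 1 ≤ t) :
    (3 : ℤ) ^ (∑ i ∈ Finset.range t, s (2 * i + 1)) < ∑ i, ∑ j, (P t) i j ∧
    ∑ i, ∑ j, (P t) i j <
      (3 : ℤ) ^ (∑ i ∈ Finset.range t, s (2 * i + 1)) *
        ∏ i ∈ Finset.range t, (2 * (s (2 * i + 2) : ℤ) + 1) := by
  have hJ' : J = Jm := hJ
  subst hJ' hM₂
  have main : ∀ n, 1 ≤ n → ∃ C : ℤ,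
      P n = C • Wm (s (2*n)) ∧
      (3:ℤ)^(∑ i ∈ Finset.range n, s (2*i+1)) < 3*C*(2*(s (2*n):ℤ)+3) ∧
      3*C*(2*(s (2*n):ℤ)+3) <
        (3:ℤ)^(∑ i ∈ Finset.range n, s (2*i+1)) *
          ∏ i ∈ Finset.range n, (2*(s (2*i+2):ℤ)+1) := by
    intro n hn
    induction n, hn using Nat.le_induction with
    | base =>
      obtain ⟨k, hk⟩ : ∃ k, s 1 = k + 2 := ⟨s 1 - 2, by omega⟩
      have h1 := hP 0
      norm_num [hP0] at h1
      have e : s 1 - 1 = k + 1 := by omega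
      rw [e] at h1
      have h2 : (1:ℤ) ≤ (s 2 : ℤ) := by exact_mod_cast hs 2
      have h3 : (0:ℤ) < 3^k := by positivity
      have hp : (3:ℤ)^(k+2) = 9 * 3^k := by ring
      refine ⟨(3:ℤ)^k, ?_, ?_, ?_⟩
      · rw [show (2*1 : ℕ) = 2 from rfl, h1, J_pow, Matrix.smul_mul, J_mul_Mpow]
      · simp only [Finset.sum_range_one, show (2*0+1 : ℕ) = 1 from rfl,
          show (2*1 : ℕ) = 2 from rfl, hk]
        nlinarith [h3, h2, hp]
      · simp only [Finset.sum_range_one, Finset.prod_range_one,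
          show (2*0+1 : ℕ) = 1 from rfl, show (2*0+2 : ℕ) = 2 from rfl,
          show (2*1 : ℕ) = 2 from rfl, hk]
        nlinarith [h3, h2, hp]
    | succ n hn ih =>
      obtain ⟨C, hC, hlow, hhigh⟩ := ih
      obtain ⟨b, hb⟩ : ∃ b, s (2*n+1) = b + 1 := ⟨s (2*n+1) - 1, by
        have := hs (2*n+1); omega⟩
      have hne : n ≠ 0 := by omega
      have hstep := hP n
      rw [if_neg hne] at hstep
      have e1 : 2*(n+1) = 2*n+2 := by ring
      have hA : (0:ℤ) < 3^(∑ i ∈ Finset.range n, s (2*i+1)) := by positivity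
      have hm : (1:ℤ) ≤ (s (2*n+2) : ℤ) := by exact_mod_cast hs (2*n+2)
      have hPP : (0:ℤ) < ∏ i ∈ Finset.range n, (2*(s (2*i+2):ℤ)+1) := by
        refine Finset.prod_pos fun i _ => ?_
        have : (1:ℤ) ≤ (s (2*i+2) : ℤ) := by exact_mod_cast hs (2*i+2)
        linarith
      refine ⟨C * ((2*(s (2*n):ℤ)+3) * 3^b), ?_, ?_, ?_⟩
      · rw [e1, hstep, hC, hb, Matrix.smul_mul, Matrix.smul_mul, W_J_M, smul_smul]
      · rw [e1, Finset.sum_range_succ, hb, pow_add]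
        set A := (3:ℤ)^(∑ i ∈ Finset.range n, s (2*i+1))
        set X := 3*C*(2*(s (2*n):ℤ)+3) with hX
        calc A * 3^(b+1) = (A*3) * 3^b := by ring
          _ ≤ (A*(2*(s (2*n+2):ℤ)+3)) * 3^b := by
              have : (3:ℤ) ≤ 2*(s (2*n+2):ℤ)+3 := by linarith
              gcongr
          _ < (X*(2*(s (2*n+2):ℤ)+3)) * 3^b := by
              have : (0:ℤ) < 2*(s (2*n+2):ℤ)+3 := by linarith
              gcongr
          _ = 3*(C*((2*(s (2*n):ℤ)+3)*3^b))*(2*(s (2*n+2):ℤ)+3) := by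
              rw [hX]; ring
      · rw [e1, Finset.sum_range_succ, Finset.prod_range_succ, hb, pow_add]
        set A := (3:ℤ)^(∑ i ∈ Finset.range n, s (2*i+1))
        set X := 3*C*(2*(s (2*n):ℤ)+3) with hX
        set Q := ∏ i ∈ Finset.range n, (2*(s (2*i+2):ℤ)+1)
        calc 3*(C*((2*(s (2*n):ℤ)+3)*3^b))*(2*(s (2*n+2):ℤ)+3)
            = X*(2*(s (2*n+2):ℤ)+3)*3^b := by rw [hX]; ring
          _ < (A*Q)*(2*(s (2*n+2):ℤ)+3)*3^b := by
              have : (0:ℤ) < 2*(s (2*n+2):ℤ)+3 := by linarith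
              gcongr
          _ ≤ (A*Q)*(3*(2*(s (2*n+2):ℤ)+1))*3^b := by
              have : (2*(s (2*n+2):ℤ)+3) ≤ 3*(2*(s (2*n+2):ℤ)+1) := by linarith
              have hAPi : (0:ℤ) ≤ A*Q := by positivity
              gcongr
          _ = A*3^(b+1)*(Q*(2*(s (2*n+2):ℤ)+1)) := by ring
  obtain ⟨C, hC, hlow, hhigh⟩ := main t ht
  have hsum : ∑ i, ∑ j, (P t) i j = 3*C*(2*(s (2*t):ℤ)+3) := by
    rw [hC]
    simp [Wm, Fin.sum_univ_three, Matrix.vecHead, Matrix.vecTail]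
    ring
  exact ⟨hsum ▸ hlow, hsum ▸ hhigh⟩
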